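/- If x ≡ y (mod 2^k) with k ≥ 3, then Γ₂(x) ≡ Γ₂(y) (mod 2^k), where Γ₂(k) = (-1)^k ∏_{t<k, t odd} t is the 2-adic Gamma function on ℕ. -/

import Mathlib

open Finset

/-- The 2-adic Gamma function on naturals, `Γ₂(k) = (-1)^k ∏_{0 < t < k, t odd} t`. -/
def gammaTwo (k : ℕ) : ℤ :=
  (-1) ^ k * ∏ t ∈ (Finset.range k).filter (fun t => Odd t), (t : ℤ)

lemma card_odd_range (n : ℕ) :
    ((range (2 * n)).filter (fun t => Odd t)).card = n := by
  induction n with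
  | zero => simp
  | succ n ih =>
    have h2 : 2 * (n + 1) = 2 * n + 1 + 1 := by ring
    rw [h2, range_add_one, range_add_one, filter_insert, filter_insert,
      if_pos ⟨n, by ring⟩, if_neg (by simp [Nat.odd_iff, Nat.mul_mod_right]),
      card_insert_of_notMem (by simp), ih]

lemma split_odd_filter (z m : ℕ) :
    (range (z + m)).filter (fun t => Odd t) =
      ((range z).filter (fun t => Odd t)) ∪
      ((Ico z (z + m) : Finset ℕ)).filter (fun t => Odd t) := by
  simp only [range_eq_Ico]
  rw [← Finset.filter_union, Finset.Ico_union_Ico_eq_Ico (Nat.zero_le _) (Nat.le_add_right _ _)]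

lemma disj_odd_filter (z m : ℕ) :
    Disjoint ((range z).filter (fun t => Odd t))
      (((Ico z (z + m) : Finset ℕ)).filter (fun t => Odd t)) := by
  simp only [range_eq_Ico]
  exact disjoint_filter_filter (Ico_disjoint_Ico_consecutive _ _ _)

lemma wilson2 : ∀ k, 3 ≤ k →
    (∏ t ∈ (range (2 ^ k)).filter (fun t => Odd t), (t : ZMod (2 ^ k))) = 1 := by
  intro k hk
  induction k, hk using Nat.le_induction with
  | base => decide
  | succ k hk ih =>
    have hpow : 2 ^ (k + 1) = 2 ^ k + 2 ^ k := by ring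
    set S : Finset ℕ := (range (2 ^ k)).filter (fun t => Odd t) with hS
    set T : Finset ℕ := ((Ico (2 ^ k) (2 ^ k + 2 ^ k) : Finset ℕ)).filter (fun t => Odd t)
      with hT
    -- integer version of ih
    set Q : ℤ := ∏ t ∈ S, (t : ℤ) with hQ
    have hQcast : ∀ n : ℕ, ((Q : ℤ) : ZMod n) = ∏ t ∈ S, (t : ZMod n) := by
      intro n; push_cast [hQ]; rfl
    have hQ1 : (2 ^ k : ℤ) ∣ Q - 1 := by
      have h0 := (ZMod.intCast_eq_intCast_iff Q 1 (2 ^ k)).mp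
        (by rw [hQcast, ih]; push_cast; rfl)
      have h := h0.dvd
      simpa using h.neg_right.neg_left
    obtain ⟨c, hc⟩ := hQ1
    have h2 : (2 : ℤ) ∣ Q - 1 := by
      refine ⟨2 ^ (k - 1) * c, ?_⟩
      rw [hc]
      have hx : (2 : ℤ) ^ k = 2 * 2 ^ (k - 1) := by
        rw [← pow_succ']; congr 1; omega
      rw [hx]; ring
    obtain ⟨d, hd⟩ := h2
    have hQsq : (2 ^ (k + 1) : ℤ) ∣ Q ^ 2 - 1 := by
      have he : Q ^ 2 - 1 = (Q - 1) * (Q + 1) := by ring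
      rw [he, hc]
      have he2 : Q + 1 = 2 * d + 2 := by omega
      rw [he2]
      exact ⟨c * (d + 1), by ring⟩
    -- second half via t ↦ 2^k + 2^k - t
    have hR : (∏ t ∈ T, (t : ZMod (2 ^ (k+1)))) =
        ∏ t ∈ S, (((2 ^ k + 2 ^ k - t : ℕ)) : ZMod (2 ^ (k+1))) := by
      apply Finset.prod_nbij' (fun t => 2 ^ k + 2 ^ k - t) (fun t => 2 ^ k + 2 ^ k - t)
      · intro a ha
        simp only [hS, hT, mem_filter, mem_Ico, mem_range] at ha ⊢
        have hne : a ≠ 2 ^ k := by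
          rintro rfl
          exact (Nat.not_odd_iff_even.mpr (Nat.even_pow.mpr ⟨even_two, by omega⟩)) ha.2
        refine ⟨by omega, ?_⟩
        exact Nat.Even.sub_odd (by omega) (by simp [Nat.even_pow]) ha.2
      · intro a ha
        simp only [hS, hT, mem_filter, mem_Ico, mem_range] at ha ⊢
        have ha1 : 1 ≤ a := ha.2.pos
        refine ⟨by omega, ?_⟩
        exact Nat.Even.sub_odd (by omega) (by simp [Nat.even_pow]) ha.2
      · intro a ha
        simp only [hT, mem_filter, mem_Ico] at ha
        omega
      · intro a ha
        simp only [hS, mem_filter, mem_range] at ha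
        omega
      · intro a ha
        simp only [hT, mem_filter, mem_Ico] at ha
        congr 1
        omega
    have hcast : ∀ t ∈ S, (((2 ^ k + 2 ^ k - t : ℕ)) : ZMod (2 ^ (k+1))) =
        (-1) * (t : ZMod (2 ^ (k+1))) := by
      intro t ht
      simp only [hS, mem_filter, mem_range] at ht
      have hle : t ≤ 2 ^ k + 2 ^ k := by omega
      have hz : ((2 ^ k + 2 ^ k : ℕ) : ZMod (2 ^ (k + 1))) = 0 := by
        rw [← hpow]; exact ZMod.natCast_self _
      rw [Nat.cast_sub hle, hz]
      ring
    have hcard : S.card = 2 ^ (k - 1) := by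
      have hx : 2 ^ k = 2 * 2 ^ (k - 1) := by
        rw [← pow_succ']; congr 1; omega
      rw [hS, hx, card_odd_range]
    have heven : Even (2 ^ (k - 1)) := Nat.even_pow.mpr ⟨even_two, by omega⟩
    have hsplit : (range (2 ^ (k + 1))).filter (fun t => Odd t) = S ∪ T := by
      rw [hpow]; exact split_odd_filter _ _
    have hdisj : Disjoint S T := disj_odd_filter _ _
    calc (∏ t ∈ (range (2 ^ (k+1))).filter (fun t => Odd t), (t : ZMod (2 ^ (k+1))))
        = (∏ t ∈ S, (t : ZMod (2 ^ (k+1)))) * (∏ t ∈ T, (t : ZMod (2 ^ (k+1)))) := by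
          rw [hsplit, prod_union hdisj]
      _ = (∏ t ∈ S, (t : ZMod (2 ^ (k+1)))) * ∏ t ∈ S, ((-1) * (t : ZMod (2 ^ (k+1)))) := by
          rw [hR, Finset.prod_congr rfl hcast]
      _ = (-1) ^ (2 ^ (k-1)) * ((∏ t ∈ S, (t : ZMod (2 ^ (k+1)))))^2 := by
          rw [Finset.prod_mul_distrib, Finset.prod_const, hcard]
          ring
      _ = ((Q : ℤ) : ZMod (2 ^ (k+1)))^2 := by
          rw [heven.neg_one_pow, one_mul, hQcast]
      _ = 1 := by
          have hzero : (((Q ^ 2 - 1 : ℤ)) : ZMod (2 ^ (k+1))) = 0 := by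
            rw [ZMod.intCast_zmod_eq_zero_iff_dvd]
            exact_mod_cast hQsq
          push_cast at hzero
          linear_combination hzero

lemma wilson2' (k : ℕ) (hk : 3 ≤ k) : ∀ x : ℕ,
    (∏ t ∈ ((Ico x (x + 2 ^ k) : Finset ℕ)).filter (fun t => Odd t), (t : ZMod (2 ^ k))) = 1 := by
  intro x
  induction x with
  | zero => simpa [← range_eq_Ico] using wilson2 k hk
  | succ x ih =>
    rcases Nat.even_or_odd x with hx | hx
    · have hs : ((Ico (x+1) (x+1 + 2 ^ k) : Finset ℕ)).filter (fun t => Odd t) =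
          ((Ico x (x + 2 ^ k) : Finset ℕ)).filter (fun t => Odd t) := by
        ext t
        simp only [mem_filter, mem_Ico, Nat.odd_iff]
        rw [Nat.even_iff] at hx
        have h2 : 2 ∣ 2 ^ k := dvd_pow_self 2 (by omega)
        omega
      rw [hs, ih]
    · have h8 : 8 ≤ 2 ^ k := by
        calc (8:ℕ) = 2 ^ 3 := by norm_num
          _ ≤ 2 ^ k := Nat.pow_le_pow_right (by norm_num) hk
      rw [Nat.odd_iff] at hx
      have h1 : ((Ico x (x + 2 ^ k) : Finset ℕ)).filter (fun t => Odd t) =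
          insert x (((Ico (x+1) (x + 2 ^ k) : Finset ℕ)).filter (fun t => Odd t)) := by
        ext t
        simp only [mem_filter, mem_Ico, mem_insert, Nat.odd_iff]
        omega
      have h2 : ((Ico (x+1) (x+1 + 2 ^ k) : Finset ℕ)).filter (fun t => Odd t) =
          insert (x + 2 ^ k) (((Ico (x+1) (x + 2 ^ k) : Finset ℕ)).filter (fun t => Odd t)) := by
        ext t
        simp only [mem_filter, mem_Ico, mem_insert, Nat.odd_iff]
        have h2 : 2 ∣ 2 ^ k := dvd_pow_self 2 (by omega)
        omega
      have hnx : x ∉ ((Ico (x+1) (x + 2 ^ k) : Finset ℕ)).filter (fun t => Odd t) := by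
        simp [mem_filter, mem_Ico]
      have hnx2 : x + 2 ^ k ∉ ((Ico (x+1) (x + 2 ^ k) : Finset ℕ)).filter (fun t => Odd t) := by
        simp [mem_filter, mem_Ico]
      rw [h2, prod_insert hnx2]
      rw [h1, prod_insert hnx] at ih
      have hcast : ((x + 2 ^ k : ℕ) : ZMod (2 ^ k)) = (x : ZMod (2 ^ k)) := by
        rw [Nat.cast_add, ZMod.natCast_self, add_zero]
      rw [hcast]
      exact ih

lemma gammaTwo_step (k : ℕ) (hk : 3 ≤ k) (z : ℕ) :
    ((gammaTwo (z + 2 ^ k) : ℤ) : ZMod (2 ^ k)) = ((gammaTwo z : ℤ) : ZMod (2 ^ k)) := by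
  have hsgn : ((-1 : ℤ)) ^ (z + 2 ^ k) = (-1) ^ z := by
    rw [pow_add, (Nat.even_pow.mpr ⟨even_two, by omega⟩).neg_one_pow, mul_one]
  unfold gammaTwo
  rw [split_odd_filter, prod_union (disj_odd_filter _ _), hsgn]
  push_cast
  rw [wilson2' k hk z]
  ring

lemma gammaTwo_mult (k : ℕ) (hk : 3 ≤ k) (z n : ℕ) :
    ((gammaTwo (z + n * 2 ^ k) : ℤ) : ZMod (2 ^ k)) = ((gammaTwo z : ℤ) : ZMod (2 ^ k)) := by
  induction n with
  | zero => simp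
  | succ n ih =>
    have h : z + (n + 1) * 2 ^ k = (z + n * 2 ^ k) + 2 ^ k := by ring
    rw [h, gammaTwo_step k hk, ih]

/-- If `x ≡ y (mod 2^k)` with `k ≥ 3` then `Γ₂(x) ≡ Γ₂(y) (mod 2^k)`. -/
theorem gammaTwo_congruent (k : ℕ) (hk : 3 ≤ k) (x y : ℕ)
    (hxy : x ≡ y [MOD 2 ^ k]) :
    gammaTwo x ≡ gammaTwo y [ZMOD 2 ^ k] := by
  have key : ∀ a b : ℕ, a ≤ b → a ≡ b [MOD 2 ^ k] →
      gammaTwo a ≡ gammaTwo b [ZMOD 2 ^ k] := by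
    intro a b hab h
    obtain ⟨c, hc⟩ := (Nat.modEq_iff_dvd' hab).mp h
    rw [mul_comm] at hc
    have hb : b = a + c * 2 ^ k := by omega
    subst hb
    have h1 := gammaTwo_mult k hk a c
    have h2 := (ZMod.intCast_eq_intCast_iff _ _ (2 ^ k)).mp h1.symm
    have h3 : ((2 ^ k : ℕ) : ℤ) = (2 : ℤ) ^ k := by push_cast; ring
    rwa [h3] at h2
  rcases le_total x y with h | h
  · exact key x y h hxy
  · exact (key y x h hxy.symm).symm
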